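/- arXiv:1707.07323 — 8 statements merged into one kernel-verified Lean document; each statement's English description precedes it below -/
import Mathlib

section
/- Let F be a field of characteristic not 2 and α, β in F. Then there exists an invertible lower-triangular matrix D over F such that for all x,y in F, D·[[0,0,x],[0,x,y],[x,y,αx+βy]]·D^T = [[0,0,x'],[0,x',y'],[x',y',0]] where (x',y') ranges over the same set F^2 as (x,y) does (i.e., the two 2-dimensional spaces of symmetric matrices are congruent). -/
open Matrix

theorem stmt_4 (F : Type*) [Field F] (h2 : (2 : F) ≠ 0) (α β : F) :
    ∃ D : Matrix (Fin 3) (Fin 3) F, IsUnit D ∧ (∀ i j : Fin 3, i < j → D i j = 0) ∧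
      {A | ∃ x y : F, A = D * !![0, 0, x; 0, x, y; x, y, α * x + β * y] * Dᵀ} =
      {A : Matrix (Fin 3) (Fin 3) F | ∃ x y : F, A = !![0, 0, x; 0, x, y; x, y, 0]} := by
  set p : F := -β / 2 with hp
  set q : F := -α / 2 - β ^ 2 / 8 with hq
  refine ⟨!![1, 0, 0; 0, 1, 0; q, p, 1], ?_, ?_, ?_⟩
  · rw [Matrix.isUnit_iff_isUnit_det]
    simp [Matrix.det_fin_three]
  · intro i j hij
    fin_cases i <;> fin_cases j <;> simp_all
  · have h4 : (4 : F) ≠ 0 := by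
      have : (4 : F) = 2 * 2 := by norm_num
      rw [this]; exact mul_ne_zero h2 h2
    have h8 : (8 : F) ≠ 0 := by
      have : (8 : F) = 2 * 4 := by norm_num
      rw [this]; exact mul_ne_zero h2 h4
    have key : ∀ x y : F,
        !![1, 0, 0; 0, 1, 0; q, p, 1] * !![0, 0, x; 0, x, y; x, y, α * x + β * y] *
          !![1, 0, 0; 0, 1, 0; q, p, 1]ᵀ =
        !![0, 0, x; 0, x, y + p * x; x, y + p * x, 0] := by
      intro x y
      have ht : (!![1, 0, 0; 0, 1, 0; q, p, 1] : Matrix (Fin 3) (Fin 3) F)ᵀ =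
          !![1, 0, q; 0, 1, p; 0, 0, 1] := by
        ext i j; fin_cases i <;> fin_cases j <;> rfl
      rw [ht]
      ext i j
      fin_cases i <;> fin_cases j <;>
        simp [Matrix.mul_apply, Fin.sum_univ_three, Matrix.vecHead, Matrix.vecTail, hp, hq] <;>
        (try field_simp) <;> ring
    ext A
    simp only [Set.mem_setOf_eq]
    constructor
    · rintro ⟨x, y, rfl⟩
      exact ⟨x, y + p * x, by rw [key]⟩
    · rintro ⟨x, y, rfl⟩
      refine ⟨x, y - p * x, ?_⟩
      rw [key]
      have : y - p * x + p * x = y := by ring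
      rw [this]
end

section
/- Let q be an odd prime power and F = F_q. The subspaces M_γ = {[[0,x,0],[x,y,0],[0,0,γy]] : x,y ∈ F} and M_δ = {[[0,x,0],[x,y,0],[0,0,δy]] : x,y ∈ F} of symmetric 3×3 matrices (γ, δ nonzero) are congruent (i.e., there is invertible D with D·M_γ·D^T = M_δ up to nonzero scalars) whenever γ/δ is a square in F_q. -/
open Matrix

theorem diagonal_congr_scales_last_entry {R : Type*} [CommRing R] (s x y c : R) :
    diagonal ![1, 1, s] * !![0, x, 0; x, y, 0; 0, 0, c] * (diagonal ![1, 1, s])ᵀ =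
      !![0, x, 0; x, y, 0; 0, 0, s * s * c] := by
  rw [diagonal_transpose]
  ext i j
  fin_cases i <;> fin_cases j <;> simp [mul_comm, mul_left_comm]

theorem isUnit_diagonal_one_one {K : Type*} [Field K] {s : K} (hs : s ≠ 0) :
    IsUnit (diagonal ![1, 1, s]) := by
  rw [isUnit_diagonal, Pi.isUnit_iff]
  intro i
  fin_cases i <;> simp [hs]

theorem stmt_5_general (F : Type*) [Field F]
    (γ δ : F) (hγ : γ ≠ 0) (hδ : δ ≠ 0) (hsq : IsSquare (γ / δ)) :
    ∃ D : Matrix (Fin 3) (Fin 3) F, IsUnit D ∧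
      {A | ∃ x y : F, A = D * !![0, x, 0; x, y, 0; 0, 0, γ * y] * Dᵀ} =
      {A : Matrix (Fin 3) (Fin 3) F | ∃ x y : F, A = !![0, x, 0; x, y, 0; 0, 0, δ * y]} := by
  obtain ⟨t, ht⟩ := hsq
  have ht0 : t ≠ 0 := by
    rintro rfl
    simp [hγ, hδ] at ht
  have hscale : ∀ y, t⁻¹ * t⁻¹ * (γ * y) = δ * y := by
    intro y
    rw [div_eq_iff hδ] at ht
    rw [ht]
    field_simp
  refine ⟨diagonal ![1, 1, t⁻¹], isUnit_diagonal_one_one (inv_ne_zero ht0), ?_⟩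
  simp only [diagonal_congr_scales_last_entry, hscale]

theorem stmt_5 (F : Type*) [Field F] [Fintype F] (hq : Odd (Fintype.card F))
    (γ δ : F) (hγ : γ ≠ 0) (hδ : δ ≠ 0) (hsq : IsSquare (γ / δ)) :
    ∃ D : Matrix (Fin 3) (Fin 3) F, IsUnit D ∧
      {A | ∃ x y : F, A = D * !![0, x, 0; x, y, 0; 0, 0, γ * y] * Dᵀ} =
      {A : Matrix (Fin 3) (Fin 3) F | ∃ x y : F, A = !![0, x, 0; x, y, 0; 0, 0, δ * y]} :=
  stmt_5_general F γ δ hγ hδ hsq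
end

section
/- Let q be a power of 2. The set of nuclei of all conics contained in the Veronese variety V_3(F_q) ⊂ PG(5,F_q) is exactly the plane of projective classes of symmetric 3×3 matrices over F_q with all diagonal entries zero. -/
/-!
In characteristic 2 a symmetric matrix `A` with zero diagonal can be written as
`v ⊗ w + w ⊗ v`, so its quadratic form `x ↦ xᵀ A x` vanishes. If `s A + t v ⊗ v = c w ⊗ w` with
`c ≠ 0`, comparing quadratic forms gives `t (x ⬝ v)² = c (x ⬝ w)²`, so `w` is orthogonal to
`v⊥` and hence parallel to `v`. This means `A` is the nucleus of the conic coming from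
`span {v, w}`.

Conversely, write a point of the plane of the conic coming from `span {e, f}` as
`a e ⊗ e + b f ⊗ f + c (e ⊗ f + f ⊗ e)`. Squaring is a bijection of a finite field of
characteristic 2, so `a = α²`. If `α ≠ 0`, the line through the point and `⟨f ⊗ f⟩` also meets
the conic at `⟨w ⊗ w⟩`, where `w = α e + (c / α) f`. Hence a nucleus has `a = b = 0`, and then
its diagonal `2 c eᵢ fᵢ` is zero.
-/

open Matrix

section CommRing

variable {R n : Type*} [CommRing R]

theorem dotProduct_vecMulVec_mulVec [Fintype n] (x v w y : n → R) :
    x ⬝ᵥ vecMulVec v w *ᵥ y = (x ⬝ᵥ v) * (w ⬝ᵥ y) := by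
  rw [dotProduct_mulVec, vecMul_vecMulVec, smul_dotProduct, smul_eq_mul]

theorem vecMulVec_smul_add_smul (a b : R) (e f : n → R) :
    vecMulVec (a • e + b • f) (a • e + b • f) =
      a ^ 2 • vecMulVec e e + b ^ 2 • vecMulVec f f +
        (a * b) • (vecMulVec e f + vecMulVec f e) := by
  ext i j
  simp only [vecMulVec_apply, Matrix.add_apply, Matrix.smul_apply, Pi.add_apply, Pi.smul_apply,
    smul_eq_mul]
  ring

end CommRing

section Field

variable {K n : Type*} [Field K]

theorem exists_eq_smul_of_forall_dotProduct_eq_zero_imp [Fintype n] [DecidableEq n]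
    {v w : n → K} (h : ∀ x, x ⬝ᵥ v = 0 → x ⬝ᵥ w = 0) : ∃ d : K, w = d • v := by
  by_cases hv : v = 0
  · refine ⟨0, ?_⟩
    rw [zero_smul, ← dotProduct_eq_zero_iff]
    intro x
    rw [dotProduct_comm]
    exact h x (by simp [hv])
  obtain ⟨i, hi⟩ := Function.ne_iff.mp hv
  refine ⟨w i / v i, sub_eq_zero.mp (dotProduct_eq_zero_iff.mp fun x => ?_)⟩
  have hx := h (x - (x ⬝ᵥ v / v i) • Pi.single i 1) (by
    rw [sub_dotProduct, smul_dotProduct, single_one_dotProduct, smul_eq_mul, div_mul_cancel₀ _ hi,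
      sub_self])
  rw [sub_dotProduct, smul_dotProduct, single_one_dotProduct, smul_eq_mul, sub_eq_zero] at hx
  rw [sub_dotProduct, smul_dotProduct, dotProduct_comm w, hx, dotProduct_comm v, smul_eq_mul]
  ring

theorem exists_eq_smul_of_smul_add_smul_vecMulVec_eq [Fintype n] [DecidableEq n]
    {A : Matrix n n K} (hA : ∀ x, x ⬝ᵥ A *ᵥ x = 0) {s t c : K} (hc : c ≠ 0) {v w : n → K}
    (h : s • A + t • vecMulVec v v = c • vecMulVec w w) : ∃ d : K, w = d • v := by
  refine exists_eq_smul_of_forall_dotProduct_eq_zero_imp fun x hxv => ?_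
  have hq := congrArg (fun M => x ⬝ᵥ M *ᵥ x) h
  simp only [add_mulVec, smul_mulVec, dotProduct_add, dotProduct_smul, hA,
    dotProduct_vecMulVec_mulVec, hxv, dotProduct_comm _ x, smul_eq_mul] at hq
  simpa [hc] using hq

variable (K) in
def conicSpan (W : Submodule K (n → K)) : Submodule K (Matrix n n K) :=
  Submodule.span K {M | ∃ v ∈ W, M = vecMulVec v v}

def IsNucleus (W : Submodule K (n → K)) (A : Matrix n n K) : Prop :=
  A ∈ conicSpan K W ∧
    ∀ v ∈ W, v ≠ 0 → ∀ s t : K, ∀ w ∈ W, w ≠ 0 → ∀ c : K, c ≠ 0 →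
      s • A + t • vecMulVec v v = c • vecMulVec w w → ∃ d : K, w = d • v

theorem vecMulVec_add_vecMulVec_mem_conicSpan_span_pair (v w : n → K) :
    vecMulVec v w + vecMulVec w v ∈ conicSpan K (Submodule.span K {v, w}) := by
  set W := Submodule.span K {v, w}
  have hmem : ∀ u ∈ W, vecMulVec u u ∈ conicSpan K W :=
    fun u hu => Submodule.subset_span ⟨u, hu, rfl⟩
  have hv : v ∈ W := Submodule.subset_span (Set.mem_insert v {w})
  have hw : w ∈ W := Submodule.subset_span (Set.mem_insert_of_mem v (Set.mem_singleton w))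
  have hsum := Submodule.sub_mem _ (Submodule.sub_mem _ (hmem _ (Submodule.add_mem _ hv hw))
    (hmem v hv)) (hmem w hw)
  convert hsum using 1
  ext i j
  simp only [vecMulVec_apply, Matrix.add_apply, Matrix.sub_apply, Pi.add_apply]
  ring

theorem conicSpan_span_pair_le (e f : n → K) :
    conicSpan K (Submodule.span K {e, f}) ≤
      Submodule.span K {vecMulVec e e, vecMulVec f f, vecMulVec e f + vecMulVec f e} := by
  refine Submodule.span_le.mpr ?_
  rintro _ ⟨u, hu, rfl⟩
  obtain ⟨a, b, rfl⟩ := Submodule.mem_span_pair.mp hu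
  exact Submodule.mem_span_triple.mpr ⟨a ^ 2, b ^ 2, a * b, (vecMulVec_smul_add_smul a b e f).symm⟩

theorem finrank_span_pair {v w : n → K} (h : LinearIndependent K ![v, w]) :
    Module.finrank K (Submodule.span K {v, w}) = 2 := by
  rw [← Matrix.range_cons_cons_empty, finrank_span_eq_card h, Fintype.card_fin]

theorem exists_linearIndependent_pair_of_finrank_eq_two [Finite n] {W : Submodule K (n → K)}
    (hW : Module.finrank K W = 2) :
    ∃ e f : n → K, LinearIndependent K ![e, f] ∧ W = Submodule.span K {e, f} := by
  let b := Module.finBasisOfFinrankEq K W hW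
  have hli : LinearIndependent K ![(b 0 : n → K), b 1] := by
    have hb : ⇑W.subtype ∘ ⇑b = ![(b 0 : n → K), b 1] := by
      ext i : 1
      fin_cases i <;> rfl
    exact hb ▸ b.linearIndependent.map' W.subtype W.ker_subtype
  refine ⟨_, _, hli, (Submodule.eq_of_le_of_finrank_eq (Submodule.span_le.mpr ?_) ?_).symm⟩
  · simp [Set.insert_subset_iff]
  · rw [finrank_span_pair hli, hW]

end Field

section CharTwo

variable {K n : Type*} [Field K] [CharP K 2]

theorem vecMulVec_add_vecMulVec_apply_self (v w : n → K) (i : n) :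
    (vecMulVec v w + vecMulVec w v) i i = 0 := by
  rw [Matrix.add_apply, vecMulVec_apply, vecMulVec_apply, mul_comm (w i), CharTwo.add_self_eq_zero]

theorem dotProduct_vecMulVec_add_vecMulVec_mulVec_self [Fintype n] (v w x : n → K) :
    x ⬝ᵥ (vecMulVec v w + vecMulVec w v) *ᵥ x = 0 := by
  rw [add_mulVec, dotProduct_add, dotProduct_vecMulVec_mulVec, dotProduct_vecMulVec_mulVec,
    dotProduct_comm w, dotProduct_comm v x, mul_comm, CharTwo.add_self_eq_zero]

theorem linearIndependent_pair_of_vecMulVec_add_vecMulVec_ne_zero {v w : n → K}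
    (h : vecMulVec v w + vecMulVec w v ≠ 0) : LinearIndependent K ![v, w] := by
  have hv : v ≠ 0 := by rintro rfl; simp at h
  refine (LinearIndependent.pair_iff' hv).mpr fun a haw => h ?_
  rw [← haw, vecMulVec_smul, smul_vecMulVec, ← smul_add, ← two_smul K, CharTwo.two_eq_zero,
    zero_smul, smul_zero]

theorem isNucleus_span_pair [Fintype n] [DecidableEq n] (v w : n → K) :
    IsNucleus (Submodule.span K {v, w}) (vecMulVec v w + vecMulVec w v) :=
  ⟨vecMulVec_add_vecMulVec_mem_conicSpan_span_pair v w,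
    fun _ _ _ _ _ _ _ _ _ hc h => exists_eq_smul_of_smul_add_smul_vecMulVec_eq
      (dotProduct_vecMulVec_add_vecMulVec_mulVec_self v w) hc h⟩

theorem eq_zero_of_isNucleus_span_pair [Finite K] {e f : n → K}
    (hli : LinearIndependent K ![e, f]) {a b c : K} (hA : IsNucleus (Submodule.span K {e, f})
      (a • vecMulVec e e + b • vecMulVec f f + c • (vecMulVec e f + vecMulVec f e))) :
    a = 0 := by
  by_contra ha
  obtain ⟨α, rfl⟩ := isSquare_of_charTwo' a
  have hα : α ≠ 0 := by rintro rfl; simp at ha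
  have he := Submodule.subset_span (R := K) (Set.mem_insert e {f})
  have hf := Submodule.subset_span (R := K) (Set.mem_insert_of_mem e (Set.mem_singleton f))
  obtain ⟨β, rfl⟩ : ∃ β, c = α * β := ⟨c / α, by field_simp⟩
  have hindep := LinearIndependent.pair_iff.mp hli
  have hw : α • e + β • f ∈ Submodule.span K {e, f} :=
    Submodule.add_mem _ (Submodule.smul_mem _ α he) (Submodule.smul_mem _ β hf)
  have hw0 : α • e + β • f ≠ 0 := fun h => hα (hindep α β h).1
  have hline : (1 : K) • ((α * α) • vecMulVec e e + b • vecMulVec f f +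
      (α * β) • (vecMulVec e f + vecMulVec f e)) + (β ^ 2 - b) • vecMulVec f f =
      (1 : K) • vecMulVec (α • e + β • f) (α • e + β • f) := by
    rw [vecMulVec_smul_add_smul]
    module
  obtain ⟨d, hd⟩ := hA.2 f hf (hli.ne_zero 1) 1 _ _ hw hw0 1 one_ne_zero hline
  exact hα (hindep α (β - d) (by rw [sub_smul, ← add_sub_assoc, hd, sub_self])).1

theorem diag_eq_zero_of_isNucleus [Finite K] [Finite n] {W : Submodule K (n → K)}
    (hW : Module.finrank K W = 2) {A : Matrix n n K} (hA : IsNucleus W A) (i : n) : A i i = 0 := by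
  obtain ⟨e, f, hli, rfl⟩ := exists_linearIndependent_pair_of_finrank_eq_two hW
  obtain ⟨a, b, c, rfl⟩ := Submodule.mem_span_triple.mp (conicSpan_span_pair_le e f hA.1)
  have ha : a = 0 := eq_zero_of_isNucleus_span_pair hli hA
  have hb : b = 0 := by
    have hA' : IsNucleus (Submodule.span K {f, e})
        (b • vecMulVec f f + a • vecMulVec e e + c • (vecMulVec f e + vecMulVec e f)) := by
      rw [Set.pair_comm, add_comm (vecMulVec f e), add_comm (b • _)]
      exact hA
    have hli' : LinearIndependent K ![f, e] := LinearIndependent.pair_symm_iff.mp hli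
    exact eq_zero_of_isNucleus_span_pair hli' hA'
  rw [ha, hb, zero_smul, zero_smul, zero_add, zero_add, Matrix.smul_apply,
    vecMulVec_add_vecMulVec_apply_self, smul_zero]

theorem exists_eq_vecMulVec_add_vecMulVec {A : Matrix (Fin 3) (Fin 3) K} (hA : A.IsSymm)
    (hdiag : ∀ i, A i i = 0) : ∃ v w : Fin 3 → K, A = vecMulVec v w + vecMulVec w v := by
  have h10 := hA.apply 0 1
  have h20 := hA.apply 0 2
  have h21 := hA.apply 1 2
  rcases ne_or_eq (A 0 1) 0 with h01 | h01
  · refine ⟨![1, 0, A 1 2 / A 0 1], ![0, A 0 1, A 0 2], ?_⟩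
    ext i j
    fin_cases i <;> fin_cases j <;> simp [hdiag, h10, h20, h21, mul_div_cancel₀ _ h01,
      div_mul_cancel₀ _ h01, mul_comm (A 0 2), CharTwo.add_self_eq_zero]
  rcases ne_or_eq (A 0 2) 0 with h02 | h02
  · refine ⟨![1, A 1 2 / A 0 2, 0], ![0, 0, A 0 2], ?_⟩
    ext i j
    fin_cases i <;> fin_cases j <;> simp [hdiag, h10, h20, h21, h01, mul_div_cancel₀ _ h02,
      div_mul_cancel₀ _ h02]
  · refine ⟨![0, 1, 0], ![0, 0, A 1 2], ?_⟩
    ext i j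
    fin_cases i <;> fin_cases j <;> simp [hdiag, h10, h20, h21, h01, h02]

end CharTwo

/-- For `q` even, the nuclei of the conics contained in the Veronese variety
`V₃(F_q) ⊂ PG(5, F_q)` form exactly the plane of (projective classes of) symmetric `3 × 3`
matrices with zero diagonal. A conic of `V₃(F_q)` is the set of points `⟨v ⊗ v⟩` for `v`
ranging over a 2-dimensional subspace `W ≤ F_q³`; a nonzero matrix `A` (in the plane spanned by
the conic) is its nucleus iff every line through `A` and a conic point is tangent to the conic,
i.e. meets the conic only at that point. -/
theorem stmt_10 (F : Type*) [Field F] [Fintype F] (h2 : ringChar F = 2) :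
    {A : Matrix (Fin 3) (Fin 3) F | A.IsSymm ∧ A ≠ 0 ∧
      ∃ W : Submodule F (Fin 3 → F), Module.finrank F W = 2 ∧
        A ∈ Submodule.span F {M : Matrix (Fin 3) (Fin 3) F | ∃ v ∈ W, M = vecMulVec v v} ∧
        ∀ v ∈ W, v ≠ 0 →
          ∀ s t : F, ∀ w ∈ W, w ≠ 0 → ∀ c : F, c ≠ 0 →
            s • A + t • vecMulVec v v = c • vecMulVec w w → ∃ d : F, w = d • v} =
    {A : Matrix (Fin 3) (Fin 3) F | A.IsSymm ∧ A ≠ 0 ∧ ∀ i, A i i = 0} := by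
  have : CharP F 2 := ringChar.of_eq h2
  ext A
  constructor
  · rintro ⟨hsym, hA0, W, hW, hA⟩
    exact ⟨hsym, hA0, diag_eq_zero_of_isNucleus hW hA⟩
  · rintro ⟨hsym, hA0, hdiag⟩
    obtain ⟨v, w, rfl⟩ := exists_eq_vecMulVec_add_vecMulVec hsym hdiag
    exact ⟨hsym, hA0, Submodule.span F {v, w},
      finrank_span_pair (linearIndependent_pair_of_vecMulVec_add_vecMulVec_ne_zero hA0),
      isNucleus_span_pair v w⟩
end

section
/- Let F be a field and B ∈ GL(3,F). If B·M₄ consists entirely of symmetric matrices, where M₄ = span{e₁⊗e₁, e₁⊗e₂} (i.e., matrices whose only nonzero entries lie in the first row, columns 1 and 2), then B·M₄ consists of matrices of rank at most 1 that are symmetric, which is impossible for a 2-dimensional space all of whose nonzero elements have rank 1 and are symmetric of the given form; hence no B ∈ GL(3,F) makes B·M₄ a subspace of symmetric matrices. -/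
open Matrix

/-- There is no invertible `B` such that `B · M₄` consists of symmetric matrices, where
`M₄ = span{E₁₁, E₁₂} = {matrices with only first row, columns 1 and 2, nonzero}`. -/
theorem stmt_11 (F : Type*) [Field F] :
    ¬ ∃ B : Matrix (Fin 3) (Fin 3) F, IsUnit B ∧
      ∀ x y : F, (B * !![x, y, 0; 0, 0, 0; 0, 0, 0]).IsSymm := by
  rintro ⟨B, hB, h⟩
  have h1 := (h 1 0).apply 1 0
  have h2 := (h 0 1).apply 1 0
  have h3 := (h 0 1).apply 2 1
  simp [Matrix.mul_apply, Fin.sum_univ_three, Matrix.vecHead, Matrix.vecTail] at h1 h2 h3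
  rw [Matrix.isUnit_iff_isUnit_det, Matrix.det_fin_three, h2, ← h1, ← h3] at hB
  simp at hB
end

section
/- Let F be a field and B ∈ GL(3,F). Let M₁₁ = span{E₁₁+E₂₂, E₁₂+E₂₃} (3×3 matrices over F). Then B·M₁₁ is not contained in the space of symmetric matrices, for any invertible B. -/
open Matrix

/-- There is no invertible `B` such that `B · M₁₁` consists of symmetric matrices, where
`M₁₁ = span{E₁₁ + E₂₂, E₁₂ + E₂₃}`. -/
theorem stmt_12 (F : Type*) [Field F] :
    ¬ ∃ B : Matrix (Fin 3) (Fin 3) F, IsUnit B ∧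
      ∀ x y : F, (B * !![x, y, 0; 0, x, y; 0, 0, 0]).IsSymm := by
  rintro ⟨B, hB, h⟩
  have h1 := h 1 0
  have h2 := h 0 1
  rw [Matrix.IsSymm] at h1 h2
  -- entry equations
  have e1 := congr_fun (congr_fun h1 0) 2
  have e2 := congr_fun (congr_fun h2 1) 0
  have e3 := congr_fun (congr_fun h2 2) 0
  have e4 := congr_fun (congr_fun h1 1) 0
  have e5 := congr_fun (congr_fun h2 2) 1
  simp [Matrix.mul_apply, Fin.sum_univ_three, Matrix.transpose_apply, Matrix.vecHead, Matrix.vecTail] at e1 e2 e3 e4 e5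
  -- e1 : B 2 0 = 0? check
  have hd : B.det = 0 := by
    rw [Matrix.det_fin_three]
    have h10 : B 1 0 = 0 := e4.symm.trans e3
    simp [e1, e2, e3, h10]
  rw [Matrix.isUnit_iff_isUnit_det, hd] at hB
  exact not_isUnit_zero hB
end

section
/- Let F be a field and B ∈ GL(3,F). Let M₇ = span{E₁₃, E₁₁+E₂₂}. Then B·M₇ is not contained in the space of symmetric 3×3 matrices, for any invertible B. -/
open Matrix

/-- There is no invertible `B` such that `B · M₇` consists of symmetric matrices, where
`M₇ = span{E₁₃, E₁₁ + E₂₂}`. -/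
theorem stmt_13 (F : Type*) [Field F] :
    ¬ ∃ B : Matrix (Fin 3) (Fin 3) F, IsUnit B ∧
      ∀ x y : F, (B * !![y, 0, x; 0, y, 0; 0, 0, 0]).IsSymm := by
  rintro ⟨B, hB, hsym⟩
  have h1 := hsym 1 0
  have h0 := hsym 0 1
  rw [Matrix.IsSymm] at h1 h0
  have e1 : B 0 0 = 0 := by
    have := congrFun (congrFun h1 2) 0
    simpa [Matrix.mul_apply, Fin.sum_univ_three, Matrix.vecHead, Matrix.vecTail] using this
  have e2 : B 1 0 = 0 := by
    have := congrFun (congrFun h1 2) 1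
    simpa [Matrix.mul_apply, Fin.sum_univ_three, Matrix.vecHead, Matrix.vecTail] using this
  have e3 : B 2 0 = 0 := by
    have := congrFun (congrFun h0 2) 0
    simpa [Matrix.mul_apply, Fin.sum_univ_three, Matrix.vecHead, Matrix.vecTail, e1] using this.symm
  have hdet : B.det = 0 := by
    rw [Matrix.det_fin_three, e1, e2, e3]; ring
  have := (Matrix.isUnit_iff_isUnit_det B).mp hB
  rw [hdet] at this
  simp at this
end

section
/- Let q be an odd prime power and let L be the 2-dimensional space of symmetric 3×3 matrices {[[0,0,x],[0,x,y],[x,y,0]] : x,y ∈ F_q}. If D ∈ GL(3,F_q) satisfies D·L·D^T = L (as sets, up to scalars), then D is lower triangular with d₁₂ = d₁₃ = d₂₃ = d₃₁ = d₃₂ = 0 and d₂₂² = d₁₁d₃₃ up to a scalar; in particular the stabiliser of PG(L) in PGL(3,F_q) has order q(q-1). -/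
/-!
Write `M x y` for the matrix `[[0,0,x],[0,x,y],[x,y,0]]` and `d₀, d₁, d₂` for the rows of `D`.
The entries of `D M D^T` are `B(dᵢ, dⱼ)` for the symmetric bilinear form of `M`, so requiring
`D M(1,0) D^T` and `D M(0,1) D^T` to lie in the pencil forces `d₀` and `d₂` to be isotropic for
both `v₁² + 2v₀v₂` and `v₁v₂`, `d₀ ⊥ d₁`, and `B(d₁, d₁) = B(d₀, d₂)`. In odd characteristic this
leaves, up to the scalar `D 1 1`, exactly the matrices `[[u,0,0],[t,1,0],[0,0,u⁻¹]]`, which all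
stabilise the pencil; so the projective stabiliser is in bijection with `F × Fˣ`.
-/

open Matrix

section

variable {F : Type*} [Field F]

variable (F) in
def pencil : Set (Matrix (Fin 3) (Fin 3) F) :=
  {A | ∃ x y : F, A = !![0, 0, x; 0, x, y; x, y, 0]}

def StabilisesPencil (D : Matrix (Fin 3) (Fin 3) F) : Prop :=
  {A | ∃ x y : F, A = D * !![0, 0, x; 0, x, y; x, y, 0] * Dᵀ} = pencil F

variable (F) in
def ProjPencilStabiliser : Type _ :=
  Quot fun D E : {D : Matrix (Fin 3) (Fin 3) F // IsUnit D ∧ StabilisesPencil D} =>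
    ∃ c : F, c ≠ 0 ∧ E.1 = c • D.1

lemma entries_of_mem_pencil {A : Matrix (Fin 3) (Fin 3) F} (hA : A ∈ pencil F) :
    A 0 0 = 0 ∧ A 0 1 = 0 ∧ A 2 2 = 0 ∧ A 1 1 = A 0 2 := by
  obtain ⟨x, y, rfl⟩ := hA
  simp

lemma mul_pencil_mul_transpose_apply (D : Matrix (Fin 3) (Fin 3) F) (x y : F) (i j : Fin 3) :
    (D * !![0, 0, x; 0, x, y; x, y, 0] * Dᵀ) i j =
      x * (D i 0 * D j 2 + D i 1 * D j 1 + D i 2 * D j 0) +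
        y * (D i 1 * D j 2 + D i 2 * D j 1) := by
  simp [mul_apply, Fin.sum_univ_three]
  ring

lemma eq_zero_of_isotropic (h2 : (2 : F) ≠ 0) {u v w : F} (hx : 2 * (u * w) + v ^ 2 = 0)
    (hy : 2 * (v * w) = 0) : v = 0 ∧ u * w = 0 := by
  have hv : v = 0 := by
    rcases mul_eq_zero.mp ((mul_eq_zero.mp hy).resolve_left h2) with hv | hw
    · exact hv
    · exact pow_eq_zero_iff two_ne_zero |>.mp (by simpa [hw] using hx)
  exact ⟨hv, (mul_eq_zero.mp (by simpa [hv] using hx)).resolve_left h2⟩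

lemma entries_of_stabilisesPencil (h2 : (2 : F) ≠ 0) {D : Matrix (Fin 3) (Fin 3) F}
    (hD : IsUnit D) (hS : StabilisesPencil D) :
    D 0 1 = 0 ∧ D 0 2 = 0 ∧ D 1 2 = 0 ∧ D 2 0 = 0 ∧ D 2 1 = 0 ∧ D 1 1 ≠ 0 ∧
      D 1 1 ^ 2 = D 0 0 * D 2 2 := by
  have hdet : D.det ≠ 0 := ((isUnit_iff_isUnit_det D).mp hD).ne_zero
  rw [det_fin_three] at hdet
  obtain ⟨x00, x01, x22, x11⟩ := entries_of_mem_pencil (hS ▸ ⟨1, 0, rfl⟩ :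
    D * !![0, 0, 1; 0, 1, 0; 1, 0, 0] * Dᵀ ∈ pencil F)
  obtain ⟨y00, y01, y22, -⟩ := entries_of_mem_pencil (hS ▸ ⟨0, 1, rfl⟩ :
    D * !![0, 0, 0; 0, 0, 1; 0, 1, 0] * Dᵀ ∈ pencil F)
  simp only [mul_pencil_mul_transpose_apply, one_mul, zero_mul, add_zero, zero_add]
    at x00 x01 x22 x11 y00 y01 y22
  -- the names below refer to `D = [[a,b,c],[d,e,f],[g,h,i]]`
  obtain ⟨hb, hac⟩ := eq_zero_of_isotropic h2 (u := D 0 0) (v := D 0 1) (w := D 0 2)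
    (by linear_combination x00) (by linear_combination y00)
  obtain ⟨hh, hgi⟩ := eq_zero_of_isotropic h2 (u := D 2 0) (v := D 2 1) (w := D 2 2)
    (by linear_combination x22) (by linear_combination y22)
  have hc : D 0 2 = 0 := by
    by_contra hc
    have ha : D 0 0 = 0 := (mul_eq_zero.mp hac).resolve_right hc
    have he : D 1 1 = 0 := (mul_eq_zero.mp (by simpa [hb] using y01)).resolve_left hc
    exact hdet (by simp [ha, hb, he, hh])
  have haei : D 0 0 * D 1 1 * D 2 2 ≠ 0 := by simpa [hb, hc, hh] using hdet
  simp only [mul_ne_zero_iff] at haei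
  obtain ⟨⟨ha, he⟩, hi⟩ := haei
  have hf : D 1 2 = 0 := (mul_eq_zero.mp (by simpa [hb, hc] using x01)).resolve_left ha
  refine ⟨hb, hc, hf, (mul_eq_zero.mp hgi).resolve_right hi, hh, he, ?_⟩
  simp only [hb, hc, hf, mul_zero, zero_mul, add_zero, zero_add] at x11
  linear_combination x11

def pencilNormalForm (t : F) (u : Fˣ) : Matrix (Fin 3) (Fin 3) F :=
  !![(u : F), 0, 0; t, 1, 0; 0, 0, (u : F)⁻¹]

lemma isUnit_pencilNormalForm (t : F) (u : Fˣ) : IsUnit (pencilNormalForm t u) := by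
  simp [isUnit_iff_isUnit_det, det_fin_three, pencilNormalForm]

lemma pencilNormalForm_mul_pencil_mul_transpose (t : F) (u : Fˣ) (x y : F) :
    pencilNormalForm t u * !![0, 0, x; 0, x, y; x, y, 0] * (pencilNormalForm t u)ᵀ =
      !![0, 0, x; 0, x, (t * x + y) / u; x, (t * x + y) / u, 0] := by
  ext i j
  rw [mul_pencil_mul_transpose_apply]
  fin_cases i <;> fin_cases j <;> simp [pencilNormalForm] <;> ring

lemma stabilisesPencil_pencilNormalForm (t : F) (u : Fˣ) :
    StabilisesPencil (pencilNormalForm t u) := by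
  ext A
  simp only [Set.mem_ofPred_eq, pencil, pencilNormalForm_mul_pencil_mul_transpose]
  constructor
  · rintro ⟨x, y, rfl⟩
    exact ⟨x, _, rfl⟩
  · rintro ⟨x, y, rfl⟩
    exact ⟨x, u * y - t * x, by rw [add_sub_cancel, mul_div_cancel_left₀ _ u.ne_zero]⟩

lemma exists_eq_smul_pencilNormalForm (h2 : (2 : F) ≠ 0) {D : Matrix (Fin 3) (Fin 3) F}
    (hD : IsUnit D) (hS : StabilisesPencil D) :
    ∃ t u, D = D 1 1 • pencilNormalForm t u := by
  obtain ⟨hb, hc, hf, hg, hh, he, he2⟩ := entries_of_stabilisesPencil h2 hD hS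
  have ha : D 0 0 ≠ 0 := by rintro ha; simp [ha, he] at he2
  refine ⟨D 1 0 / D 1 1, Units.mk0 (D 0 0 / D 1 1) (div_ne_zero ha he), ?_⟩
  ext i j
  fin_cases i <;> fin_cases j <;> simp [pencilNormalForm, hb, hc, hf, hg, hh]
  · exact (mul_div_cancel₀ _ he).symm
  · exact (mul_div_cancel₀ _ he).symm
  · field_simp
    linear_combination -he2

namespace ProjPencilStabiliser

def ofNormalForm (p : F × Fˣ) : ProjPencilStabiliser F :=
  Quot.mk _ ⟨pencilNormalForm p.1 p.2, isUnit_pencilNormalForm _ _,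
    stabilisesPencil_pencilNormalForm _ _⟩

def invariants : ProjPencilStabiliser F → F × F :=
  Quot.lift (fun D => (D.1 1 0 / D.1 1 1, D.1 0 0 / D.1 1 1)) <| by
    rintro D E ⟨c, hc, hE⟩
    simp [hE, mul_div_mul_left _ _ hc]

lemma invariants_ofNormalForm (p : F × Fˣ) : invariants (ofNormalForm p) = (p.1, (p.2 : F)) := by
  simp [invariants, ofNormalForm, pencilNormalForm]

lemma ofNormalForm_injective : Function.Injective (ofNormalForm (F := F)) := by
  intro p q hpq
  have h := congrArg invariants hpq
  simp only [invariants_ofNormalForm, Prod.mk.injEq] at h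
  exact Prod.ext h.1 (Units.ext h.2)

lemma ofNormalForm_surjective (h2 : (2 : F) ≠ 0) :
    Function.Surjective (ofNormalForm (F := F)) := by
  rintro ⟨D, hD, hS⟩
  obtain ⟨t, u, hDtu⟩ := exists_eq_smul_pencilNormalForm h2 hD hS
  obtain ⟨-, -, -, -, -, he, -⟩ := entries_of_stabilisesPencil h2 hD hS
  exact ⟨(t, u), Quot.sound ⟨D 1 1, he, hDtu⟩⟩

lemma card [Fintype F] (h2 : (2 : F) ≠ 0) :
    Nat.card (ProjPencilStabiliser F) = Fintype.card F * (Fintype.card F - 1) := by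
  rw [← Nat.card_congr (Equiv.ofBijective _ ⟨ofNormalForm_injective, ofNormalForm_surjective h2⟩),
    Nat.card_prod, Nat.card_units, Nat.card_eq_fintype_card]

end ProjPencilStabiliser

end

/-- For `q` odd and `L = {[[0,0,x],[0,x,y],[x,y,0]] : x, y ∈ F_q}`: every `D ∈ GL(3, F_q)`
stabilising `L` under congruence is, up to a nonzero scalar, lower triangular with
`d₁₂ = d₁₃ = d₂₃ = d₃₁ = d₃₂ = 0` and `d₂₂² = d₁₁·d₃₃`; and the setwise stabiliser of
`PG(L)` in `PGL(3, F_q)` (congruence classes of stabilising matrices modulo scalars) has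
order `q(q - 1)`. -/
theorem stmt_17 (F : Type*) [Field F] [Fintype F] (hq : Odd (Fintype.card F)) :
    (∀ D : Matrix (Fin 3) (Fin 3) F, IsUnit D →
      {A | ∃ x y : F, A = D * !![0, 0, x; 0, x, y; x, y, 0] * Dᵀ} =
        {A : Matrix (Fin 3) (Fin 3) F | ∃ x y : F, A = !![0, 0, x; 0, x, y; x, y, 0]} →
      ∃ c : F, c ≠ 0 ∧ (c • D) 0 1 = 0 ∧ (c • D) 0 2 = 0 ∧ (c • D) 1 2 = 0 ∧
        (c • D) 2 0 = 0 ∧ (c • D) 2 1 = 0 ∧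
        ((c • D) 1 1) ^ 2 = (c • D) 0 0 * (c • D) 2 2) ∧
    Nat.card (Quot (fun D E : {D : Matrix (Fin 3) (Fin 3) F // IsUnit D ∧
        {A | ∃ x y : F, A = (D : Matrix (Fin 3) (Fin 3) F) * !![0, 0, x; 0, x, y; x, y, 0] *
            (D : Matrix (Fin 3) (Fin 3) F)ᵀ} =
          {A : Matrix (Fin 3) (Fin 3) F | ∃ x y : F, A = !![0, 0, x; 0, x, y; x, y, 0]}} =>
      ∃ c : F, c ≠ 0 ∧ (E : Matrix (Fin 3) (Fin 3) F) = c • (D : Matrix (Fin 3) (Fin 3) F))) =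
      Fintype.card F * (Fintype.card F - 1) := by
  have h2 : (2 : F) ≠ 0 := Ring.two_ne_zero fun hchar =>
    Nat.not_even_iff_odd.mpr hq (Nat.even_iff.mpr (FiniteField.even_card_of_char_two hchar))
  refine ⟨fun D hD hS => ?_, ProjPencilStabiliser.card h2⟩
  obtain ⟨hb, hc, hf, hg, hh, -, he2⟩ := entries_of_stabilisesPencil h2 hD hS
  exact ⟨1, one_ne_zero, by simpa using ⟨hb, hc, hf, hg, hh, he2⟩⟩
end

section
/- Let q be a power of 2 and let L_e be the 2-dimensional space of symmetric 3×3 matrices {[[0,0,x],[0,x,y],[x,y,y]] : x,y ∈ F_q}. The setwise stabiliser of PG(L_e) in PGL(3,F_q) under the congruence action M ↦ DMD^T has order q². -/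
open Matrix

private lemma key_mul (F : Type*) [Field F] (h2 : (2:F) = 0) (s t x y : F) :
    !![1,0,0; t*t+t,1,0; s,t,1] * !![0, 0, x; 0, x, y; x, y, y] * !![1,0,0; t*t+t,1,0; s,t,1]ᵀ
    = !![0, 0, x; 0, x, t*t*x+y; x, t*t*x+y, t*t*x+y] := by
  have ht : !![(1:F),0,0; t*t+t,1,0; s,t,1]ᵀ = !![1,t*t+t,s; 0,1,t; 0,0,1] := by
    ext i j; fin_cases i <;> fin_cases j <;> rfl
  rw [ht, Matrix.mul_fin_three, Matrix.mul_fin_three]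
  ext i j
  fin_cases i <;> fin_cases j <;> simp [Matrix.vecHead, Matrix.vecTail] <;>
    first
      | linear_combination (x*t)*h2
      | linear_combination (x*s+y*t)*h2

private lemma memb (F : Type*) [Field F] (h2 : (2:F) = 0) (s t : F) :
    IsUnit !![1,0,0; t*t+t,1,0; s,t,1] ∧
    {A | ∃ x y : F, A = !![1,0,0; t*t+t,1,0; s,t,1] * !![0, 0, x; 0, x, y; x, y, y] *
        !![1,0,0; t*t+t,1,0; s,t,1]ᵀ} =
      {A : Matrix (Fin 3) (Fin 3) F | ∃ x y : F, A = !![0, 0, x; 0, x, y; x, y, y]} := by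
  constructor
  · rw [Matrix.isUnit_iff_isUnit_det, Matrix.det_fin_three]
    simp
  · ext A
    simp only [Set.mem_setOf_eq]
    constructor
    · rintro ⟨x, y, rfl⟩
      exact ⟨x, t*t*x+y, key_mul F h2 s t x y⟩
    · rintro ⟨x, y, rfl⟩
      refine ⟨x, t*t*x+y, ?_⟩
      rw [key_mul F h2 s t x (t*t*x+y)]
      have : t*t*x+(t*t*x+y) = y := by linear_combination (t*t*x)*h2
      rw [this]

set_option maxHeartbeats 1000000 in
private lemma classify (F : Type*) [Field F] (h2 : (2:F) = 0) (D : Matrix (Fin 3) (Fin 3) F)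
    (hu : IsUnit D)
    (hset : {A | ∃ x y : F, A = D * !![0, 0, x; 0, x, y; x, y, y] * Dᵀ} =
      {A : Matrix (Fin 3) (Fin 3) F | ∃ x y : F, A = !![0, 0, x; 0, x, y; x, y, y]}) :
    ∃ a s t : F, a ≠ 0 ∧ D = a • !![1,0,0; t*t+t,1,0; s,t,1] := by
  obtain ⟨d00,d01,d02,d10,d11,d12,d20,d21,d22, rfl⟩ :
      ∃ a b c d e f g h i, D = !![a,b,c;d,e,f;g,h,i] :=
    ⟨_,_,_,_,_,_,_,_,_, Matrix.eta_fin_three D⟩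
  have htr : (!![d00,d01,d02;d10,d11,d12;d20,d21,d22])ᵀ = !![d00,d10,d20;d01,d11,d21;d02,d12,d22] := by
    ext i j; fin_cases i <;> fin_cases j <;> rfl
  have hA : !![d00,d01,d02;d10,d11,d12;d20,d21,d22] * !![0,0,(1:F);0,1,0;1,0,0] * (!![d00,d01,d02;d10,d11,d12;d20,d21,d22])ᵀ ∈
      {A : Matrix (Fin 3) (Fin 3) F | ∃ x y : F, A = !![0, 0, x; 0, x, y; x, y, y]} := by
    rw [← hset]; exact ⟨1, 0, rfl⟩
  have hB : !![d00,d01,d02;d10,d11,d12;d20,d21,d22] * !![0,0,(0:F);0,0,1;0,1,1] * (!![d00,d01,d02;d10,d11,d12;d20,d21,d22])ᵀ ∈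
      {A : Matrix (Fin 3) (Fin 3) F | ∃ x y : F, A = !![0, 0, x; 0, x, y; x, y, y]} := by
    rw [← hset]; exact ⟨0, 1, rfl⟩
  obtain ⟨x1, y1, hA⟩ := hA
  obtain ⟨x2, y2, hB⟩ := hB
  rw [htr, Matrix.mul_fin_three, Matrix.mul_fin_three] at hA hB
  have eA00 := congrFun (congrFun hA 0) 0
  have eA02 := congrFun (congrFun hA 0) 2
  have eA11 := congrFun (congrFun hA 1) 1
  have eA12 := congrFun (congrFun hA 1) 2
  have eA22 := congrFun (congrFun hA 2) 2
  have eB00 := congrFun (congrFun hB 0) 0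
  have eB02 := congrFun (congrFun hB 0) 2
  have eB11 := congrFun (congrFun hB 1) 1
  have eB12 := congrFun (congrFun hB 1) 2
  have eB22 := congrFun (congrFun hB 2) 2
  simp [Matrix.vecHead, Matrix.vecTail] at eA00 eA02 eA11 eA12 eA22 eB00 eB02 eB11 eB12 eB22
  have h01 : d01 = 0 := mul_self_eq_zero.mp (by linear_combination eA00 - d00*d02*h2)
  have h02 : d02 = 0 := mul_self_eq_zero.mp (by linear_combination eB00 - d01*d02*h2)
  have h12 : d12 = 0 := mul_self_eq_zero.mp (by
    linear_combination eB11 - eB02 - d11*d12*h2 + d21*h02 + d22*h01 + d22*h02)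
  have hDet : (!![d00,d01,d02;d10,d11,d12;d20,d21,d22]).det = d00*d11*d22 := by
    rw [Matrix.det_fin_three]
    simp [Matrix.vecHead, Matrix.vecTail]
    linear_combination (-d00*d21)*h12 + (-d10*d22 + d12*d20)*h01 + (d10*d21 - d11*d20)*h02
  rw [Matrix.isUnit_iff_isUnit_det, isUnit_iff_ne_zero, hDet] at hu
  have h00 : d00 ≠ 0 := fun h => hu (by rw [h]; ring)
  have h11 : d11 ≠ 0 := fun h => hu (by rw [h]; ring)
  have h22 : d22 ≠ 0 := fun h => hu (by rw [h]; ring)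
  have h1122 : d11 = d22 := mul_right_cancel₀ h22 (by
    linear_combination eB12 - eB22 - (d21+d22)*h12 + d21*d22*h2)
  have h0022 : d00 = d22 := mul_right_cancel₀ h22 (by
    linear_combination eA02 - eA11 - d21*h01 - d20*h02 + d10*d12*h2 + (d11+d22)*h1122)
  have hb0 : d00*d10 = d21*d21 + d00*d21 := by
    linear_combination eA12 - eA22 - d20*h12 + d20*d22*h2 + d10*h0022 - d21*h0022 - d21*h1122 - d21*d22*h2
  clear hA hB eA00 eA02 eA11 eA12 eA22 eB00 eB02 eB11 eB12 eB22 hset hu hDet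
  refine ⟨d00, d20*d00⁻¹, d21*d00⁻¹, h00, ?_⟩
  ext i j
  fin_cases i <;> fin_cases j <;>
    simp [Matrix.vecHead, Matrix.vecTail] <;>
    (try field_simp) <;>
    first
      | rfl
      | exact h01
      | exact h02
      | exact h12
      | linear_combination h0022
      | linear_combination h1122 - h1122 + h0022
      | linear_combination h1122 + h0022
      | linear_combination d00*hb0
      | linear_combination d00^2*hb0
      | linear_combination h1122 - h0022
      | linear_combination -h0022
      | linear_combination hb0
      | ring

/-- For `q` even and `L_e = {[[0,0,x],[0,x,y],[x,y,y]] : x, y ∈ F_q}`, the setwise stabiliser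
of `PG(L_e)` in `PGL(3, F_q)` under the congruence action `M ↦ D M Dᵀ` (i.e. the stabilising
matrices of `GL(3, F_q)` modulo nonzero scalars) has order `q²`. -/
theorem stmt_18 (F : Type*) [Field F] [Fintype F] (h2 : ringChar F = 2) :
    Nat.card (Quot (fun D E : {D : Matrix (Fin 3) (Fin 3) F // IsUnit D ∧
        {A | ∃ x y : F, A = (D : Matrix (Fin 3) (Fin 3) F) * !![0, 0, x; 0, x, y; x, y, y] *
            (D : Matrix (Fin 3) (Fin 3) F)ᵀ} =
          {A : Matrix (Fin 3) (Fin 3) F | ∃ x y : F, A = !![0, 0, x; 0, x, y; x, y, y]}} =>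
      ∃ c : F, c ≠ 0 ∧ (E : Matrix (Fin 3) (Fin 3) F) = c • (D : Matrix (Fin 3) (Fin 3) F))) =
      (Fintype.card F) ^ 2 := by
  have h2' : (2:F) = 0 := by
    have := ringChar.Nat.cast_ringChar (R := F)
    rw [h2] at this
    exact_mod_cast this
  set S := {D : Matrix (Fin 3) (Fin 3) F // IsUnit D ∧
        {A | ∃ x y : F, A = (D : Matrix (Fin 3) (Fin 3) F) * !![0, 0, x; 0, x, y; x, y, y] *
            (D : Matrix (Fin 3) (Fin 3) F)ᵀ} =
          {A : Matrix (Fin 3) (Fin 3) F | ∃ x y : F, A = !![0, 0, x; 0, x, y; x, y, y]}} with hS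
  set r : S → S → Prop := fun D E =>
      ∃ c : F, c ≠ 0 ∧ (E : Matrix (Fin 3) (Fin 3) F) = c • (D : Matrix (Fin 3) (Fin 3) F)
    with hr
  have hψ : ∀ p : F × F, IsUnit !![1,0,0; p.2*p.2+p.2,1,0; p.1,p.2,1] ∧
      {A | ∃ x y : F, A = !![1,0,0; p.2*p.2+p.2,1,0; p.1,p.2,1] * !![0, 0, x; 0, x, y; x, y, y] *
          !![1,0,0; p.2*p.2+p.2,1,0; p.1,p.2,1]ᵀ} =
        {A : Matrix (Fin 3) (Fin 3) F | ∃ x y : F, A = !![0, 0, x; 0, x, y; x, y, y]} :=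
    fun p => memb F h2' p.1 p.2
  let ψ : F × F → Quot r := fun p => Quot.mk r ⟨!![1,0,0; p.2*p.2+p.2,1,0; p.1,p.2,1], hψ p⟩
  have hχresp : ∀ D E : S, r D E →
      ((D : Matrix (Fin 3) (Fin 3) F) 2 0 * ((D : Matrix (Fin 3) (Fin 3) F) 0 0)⁻¹,
       (D : Matrix (Fin 3) (Fin 3) F) 2 1 * ((D : Matrix (Fin 3) (Fin 3) F) 0 0)⁻¹) =
      ((E : Matrix (Fin 3) (Fin 3) F) 2 0 * ((E : Matrix (Fin 3) (Fin 3) F) 0 0)⁻¹,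
       (E : Matrix (Fin 3) (Fin 3) F) 2 1 * ((E : Matrix (Fin 3) (Fin 3) F) 0 0)⁻¹) := by
    rintro D E ⟨c, hc, hE⟩
    rw [hE]
    simp only [Matrix.smul_apply, smul_eq_mul]
    have key : ∀ u v : F, c * u * (c * v)⁻¹ = u * v⁻¹ := fun u v => by
      rw [_root_.mul_inv, mul_comm c u, mul_assoc, ← mul_assoc c, mul_inv_cancel₀ hc, one_mul]
    rw [Prod.ext_iff]
    exact ⟨(key _ _).symm, (key _ _).symm⟩
  let χ : Quot r → F × F := Quot.lift (fun D : S =>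
      ((D : Matrix (Fin 3) (Fin 3) F) 2 0 * ((D : Matrix (Fin 3) (Fin 3) F) 0 0)⁻¹,
       (D : Matrix (Fin 3) (Fin 3) F) 2 1 * ((D : Matrix (Fin 3) (Fin 3) F) 0 0)⁻¹))
    (fun D E h => hχresp D E h)
  have hinj : Function.Injective ψ := by
    intro p q h
    have := congrArg χ h
    simpa [χ, ψ, Prod.ext_iff, Matrix.vecHead, Matrix.vecTail] using this
  have hsurj : Function.Surjective ψ := by
    refine Quot.ind ?_
    rintro ⟨D, hu, hsetD⟩
    obtain ⟨a, s, t, ha, hD⟩ := classify F h2' D hu hsetD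
    exact ⟨(s, t), Quot.sound ⟨a, ha, hD⟩⟩
  have e : (F × F) ≃ Quot r := Equiv.ofBijective ψ ⟨hinj, hsurj⟩
  rw [← Nat.card_congr e]
  simp [Nat.card_eq_fintype_card, sq]
end
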